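/- Let $K$ be a compact metric space and $p: C(K) \to \mathbb{R}$ convex, monotone, and translation-invariant, and define $\mathfrak{h}(\nu) = \inf\{\int\phi\,d\nu : p(-\phi) \le 0\}$ for Borel probability measures $\nu$ on $K$. Then for every $\phi \in C(K)$: (a) $p(\phi) \ge \sup_\nu \{\mathfrak{h}(\nu) + \int \phi\,d\nu\}$ where $\nu$ ranges over all Borel probability measures on $K$; (b) for each fixed $\nu$, the inverse variational formula $\mathfrak{h}(\nu) = \inf_{\psi \in C(K)}\{p(\psi) - \int \psi\,d\nu\}$ holds; (c) equality in (a) is attained: $p(\phi) = \max_\nu\{\mathfrak{h}(\nu) + \int\phi\,d\nu\}$, with the maximum attained at any tangent functional to $p$ at $\phi$. -/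

import Mathlib

open MeasureTheory
open scoped NNReal ENNReal

/-- The abstract measure-theoretic entropy associated to a pressure-like functional
`p : C(K) → ℝ`: `𝔥(ν) = inf { ∫φ dν : p(-φ) ≤ 0 }` (in the extended reals). -/
noncomputable def absEnt {K : Type*} [TopologicalSpace K] [MeasurableSpace K]
    (p : C(K, ℝ) → ℝ) (ν : Measure K) : EReal :=
  ⨅ (φ : C(K, ℝ)) (_ : p (-φ) ≤ 0), ((∫ x, φ x ∂ν : ℝ) : EReal)

section RMK

variable {K : Type*} [MetricSpace K] [CompactSpace K] [MeasurableSpace K] [BorelSpace K]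

lemma cmIntegrable (μ : Measure K) [IsFiniteMeasure μ] (f : C(K, ℝ)) :
    Integrable (fun x => f x) μ :=
  f.continuous.integrable_of_hasCompactSupport ((isClosed_tsupport _).isCompact)

/-- Pointwise clamp identity used for the layercake decomposition. -/
lemma clamp_eq {δ : ℝ} (hδ : 0 < δ) (y a : ℝ) :
    δ * min (max ((y - a)/δ) 0) 1 = min y (a + δ) - min y a := by
  rcases le_total y a with h | h
  · have h1 : (y - a)/δ ≤ 0 := div_nonpos_of_nonpos_of_nonneg (by linarith) hδ.le
    rw [max_eq_right h1, min_eq_left (by linarith : y ≤ a + δ), min_eq_left h,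
      min_eq_left zero_le_one]
    ring
  · rcases le_total y (a + δ) with h2 | h2
    · have h1 : 0 ≤ (y - a)/δ := div_nonneg (by linarith) hδ.le
      have h3 : (y - a)/δ ≤ 1 := (div_le_one hδ).2 (by linarith)
      rw [max_eq_left h1, min_eq_left h3, min_eq_left h2, min_eq_right h]
      field_simp
    · have h1 : (1:ℝ) ≤ (y - a)/δ := (one_le_div hδ).2 (by linarith)
      rw [max_eq_left (by linarith : (0:ℝ) ≤ (y - a)/δ), min_eq_right h1,
        min_eq_right h2, min_eq_right h]
      ring


variable (L : C(K, ℝ) →L[ℝ] ℝ)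

/-- Test functions for the Riesz content of a set `C`. -/
def testFns (C : Set K) : Set C(K, ℝ) := {f | (∀ x, 0 ≤ f x) ∧ ∀ x ∈ C, 1 ≤ f x}

omit [CompactSpace K] [MeasurableSpace K] [BorelSpace K] in
lemma one_mem_testFns (C : Set K) : ContinuousMap.const K 1 ∈ testFns C :=
  ⟨fun _ => zero_le_one, fun _ _ => le_refl 1⟩

/-- The Riesz content of a set. -/
noncomputable def lam (C : Set K) : ℝ := sInf (L '' testFns C)

variable (hpos : ∀ f : C(K, ℝ), (∀ x, 0 ≤ f x) → 0 ≤ L f)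

section withPos
include hpos

lemma L_mono : ∀ f g : C(K, ℝ), (∀ x, f x ≤ g x) → L f ≤ L g := by
  intro f g h
  have h0 : (0:ℝ) ≤ L (g - f) := hpos _ (fun x => by simpa using sub_nonneg.2 (h x))
  have : L (g - f) = L g - L f := by rw [map_sub]
  linarith

lemma lam_bddBelow (C : Set K) : BddBelow (L '' testFns C) := by
  refine ⟨0, fun r hr => ?_⟩
  rcases hr with ⟨f, hf, rfl⟩
  exact hpos f hf.1

omit hpos in
lemma lam_nonempty (C : Set K) : (L '' testFns C).Nonempty :=
  ⟨_, _, one_mem_testFns C, rfl⟩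

lemma lam_nonneg (C : Set K) : 0 ≤ lam L C :=
  le_csInf (lam_nonempty L C) (fun r hr => by rcases hr with ⟨f, hf, rfl⟩; exact hpos f hf.1)

lemma lam_le {C : Set K} {f : C(K, ℝ)} (hf : f ∈ testFns C) : lam L C ≤ L f :=
  csInf_le (lam_bddBelow L hpos C) ⟨f, hf, rfl⟩

lemma lam_exists_lt (C : Set K) {ε : ℝ} (hε : 0 < ε) :
    ∃ f ∈ testFns C, L f < lam L C + ε := by
  obtain ⟨r, hr, hlt⟩ := Real.lt_sInf_add_pos (lam_nonempty L C) hε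
  rcases hr with ⟨f, hf, rfl⟩
  exact ⟨f, hf, hlt⟩

lemma lam_mono {C₁ C₂ : Set K} (h : C₁ ⊆ C₂) : lam L C₁ ≤ lam L C₂ :=
  csInf_le_csInf (lam_bddBelow L hpos C₁) (lam_nonempty L C₂)
    (Set.image_mono (fun f hf => ⟨hf.1, fun x hx => hf.2 x (h hx)⟩))

lemma lam_union_le (C₁ C₂ : Set K) : lam L (C₁ ∪ C₂) ≤ lam L C₁ + lam L C₂ := by
  refine le_of_forall_pos_le_add (fun ε hε => ?_)
  obtain ⟨f₁, hf₁, hlt₁⟩ := lam_exists_lt L hpos C₁ (half_pos hε)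
  obtain ⟨f₂, hf₂, hlt₂⟩ := lam_exists_lt L hpos C₂ (half_pos hε)
  have hmem : f₁ + f₂ ∈ testFns (C₁ ∪ C₂) := by
    constructor
    · intro x; simpa using add_nonneg (hf₁.1 x) (hf₂.1 x)
    · rintro x (hx | hx)
      · simpa using le_add_of_le_of_nonneg (hf₁.2 x hx) (hf₂.1 x)
      · simpa using le_add_of_nonneg_of_le (hf₁.1 x) (hf₂.2 x hx)
  have := lam_le L hpos hmem
  rw [map_add] at this
  linarith

lemma lam_union_disjoint {C₁ C₂ : Set K} (hC₁ : IsClosed C₁) (hC₂ : IsClosed C₂)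
    (hd : Disjoint C₁ C₂) : lam L C₁ + lam L C₂ ≤ lam L (C₁ ∪ C₂) := by
  obtain ⟨h, h1, h2, hbd⟩ := exists_continuous_zero_one_of_isClosed hC₂ hC₁ hd.symm
  -- h = 0 on C₂, h = 1 on C₁, 0 ≤ h ≤ 1
  refine le_csInf (lam_nonempty L (C₁ ∪ C₂)) ?_
  rintro r ⟨f, hf, rfl⟩
  have hfh : f * h ∈ testFns C₁ := by
    constructor
    · intro x; exact mul_nonneg (hf.1 x) (hbd x).1
    · intro x hx
      have := hf.2 x (Or.inl hx)
      have h1x : h x = 1 := h2 hx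
      simp only [ContinuousMap.mul_apply, h1x, mul_one]
      exact this
  have hfh' : f * (ContinuousMap.const K 1 - h) ∈ testFns C₂ := by
    constructor
    · intro x
      exact mul_nonneg (hf.1 x) (by simpa using (hbd x).2)
    · intro x hx
      have := hf.2 x (Or.inr hx)
      have h0x : h x = 0 := h1 hx
      simp only [ContinuousMap.mul_apply, ContinuousMap.sub_apply, ContinuousMap.const_apply, h0x,
        sub_zero, mul_one]
      exact this
  have hsum : f * h + f * (ContinuousMap.const K 1 - h) = f := by
    ext x; simp [ContinuousMap.mul_apply]; ring
  have := add_le_add (lam_le L hpos hfh) (lam_le L hpos hfh')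
  calc lam L C₁ + lam L C₂ ≤ L (f * h) + L (f * (ContinuousMap.const K 1 - h)) := this
    _ = L (f * h + f * (ContinuousMap.const K 1 - h)) := (map_add _ _ _).symm
    _ = L f := by rw [hsum]

/-- The Riesz content as a `MeasureTheory.Content`. -/
noncomputable def rContent : Content K where
  toFun C := Real.toNNReal (lam L C)
  mono' C₁ C₂ h := Real.toNNReal_mono (lam_mono L hpos h)
  sup_disjoint' C₁ C₂ hd h₁ h₂ := by
    have hle : lam L ((C₁ ⊔ C₂ : TopologicalSpace.Compacts K) : Set K)
        ≤ lam L C₁ + lam L C₂ := lam_union_le L hpos _ _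
    have hge : lam L C₁ + lam L C₂
        ≤ lam L ((C₁ ⊔ C₂ : TopologicalSpace.Compacts K) : Set K) :=
      lam_union_disjoint L hpos h₁ h₂ hd
    show Real.toNNReal (lam L ((C₁ ⊔ C₂ : TopologicalSpace.Compacts K) : Set K))
        = Real.toNNReal (lam L (C₁ : Set K)) + Real.toNNReal (lam L (C₂ : Set K))
    rw [le_antisymm hle hge, Real.toNNReal_add (lam_nonneg L hpos C₁) (lam_nonneg L hpos C₂)]
  sup_le' C₁ C₂ :=
    (Real.toNNReal_mono (lam_union_le L hpos _ _)).trans Real.toNNReal_add_le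

/-- The Riesz measure associated to a positive functional. -/
noncomputable def rMeasure : Measure K := (rContent L hpos).measure

variable (hone : L (ContinuousMap.const K 1) = 1)

section withOne
include hone

lemma lam_univ : lam L (Set.univ : Set K) = 1 := by
  refine le_antisymm ?_ ?_
  · have := lam_le L hpos (one_mem_testFns (Set.univ : Set K))
    rwa [hone] at this
  · refine le_csInf (lam_nonempty L _) ?_
    rintro r ⟨f, hf, rfl⟩
    have := L_mono L hpos (ContinuousMap.const K 1) f (fun x => hf.2 x trivial)
    rwa [hone] at this

omit hone in
lemma rContent_univ_apply :
    (rContent L hpos) ⟨Set.univ, isCompact_univ⟩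
      = ((Real.toNNReal (lam L (Set.univ : Set K)) : ℝ≥0) : ℝ≥0∞) := rfl

lemma rMeasure_univ : rMeasure L hpos (Set.univ : Set K) = 1 := by
  rw [rMeasure, Content.measure_apply _ MeasurableSet.univ,
    (rContent L hpos).outerMeasure_of_isOpen Set.univ isOpen_univ]
  have h1 : (rContent L hpos).innerContent ⟨Set.univ, isOpen_univ⟩
      = (rContent L hpos) ⟨Set.univ, isCompact_univ⟩ := by
    refine le_antisymm ?_ ?_
    · exact iSup_le fun C => iSup_le fun _ =>
        (rContent L hpos).mono _ _ (Set.subset_univ _)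
    · exact (rContent L hpos).le_innerContent _ _ (Set.subset_univ _)
  rw [h1, rContent_univ_apply, lam_univ (L := L) (hpos := hpos) (hone := hone)]
  simp

lemma rMeasure_prob : IsProbabilityMeasure (rMeasure L hpos) :=
  ⟨rMeasure_univ L hpos hone⟩

end withOne

/-- Key upper bound: the measure of a compact set is at most `L g` for any test function. -/
lemma rMeasure_compact_le {C : Set K} {g : C(K, ℝ)}
    (hg0 : ∀ x, 0 ≤ g x) (hg1 : ∀ x ∈ C, 1 ≤ g x) :
    ((rMeasure L hpos) C).toReal ≤ L g := by
  have hLg : 0 ≤ L g := hpos g hg0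
  have key : ∀ θ : ℝ, 0 < θ → θ < 1 → ((rMeasure L hpos) C).toReal ≤ θ⁻¹ * L g := by
    intro θ hθ0 hθ1
    have hUopen : IsOpen {x | θ < g x} := isOpen_lt continuous_const g.continuous
    have hCU : C ⊆ {x | θ < g x} := fun x hx => lt_of_lt_of_le hθ1 (hg1 x hx)
    have h1 : (rMeasure L hpos) C ≤ (rMeasure L hpos) {x | θ < g x} := measure_mono hCU
    have h2 : (rMeasure L hpos) {x | θ < g x}
        = (rContent L hpos).innerContent ⟨{x | θ < g x}, hUopen⟩ := by
      rw [rMeasure, Content.measure_apply _ hUopen.measurableSet,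
        (rContent L hpos).outerMeasure_of_isOpen _ hUopen]
    have h3 : (rContent L hpos).innerContent ⟨{x | θ < g x}, hUopen⟩
        ≤ ENNReal.ofReal (θ⁻¹ * L g) := by
      refine iSup_le fun C' => iSup_le fun hC' => ?_
      have hmem : θ⁻¹ • g ∈ testFns (C' : Set K) := by
        constructor
        · intro x
          simpa using smul_nonneg (inv_nonneg.2 hθ0.le) (hg0 x)
        · intro x hx
          have hx' : θ < g x := hC' hx
          have hθg : θ ≤ g x := hx'.le
          have : (1 : ℝ) ≤ θ⁻¹ * g x := by
            calc (1:ℝ) = θ⁻¹ * θ := (inv_mul_cancel₀ hθ0.ne').symm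
              _ ≤ θ⁻¹ * g x := mul_le_mul_of_nonneg_left hθg (inv_nonneg.2 hθ0.le)
          simpa using this
      have hle := lam_le L hpos hmem
      rw [_root_.map_smul, smul_eq_mul] at hle
      have : ((rContent L hpos) C' : ℝ≥0∞) = ENNReal.ofReal (lam L (C' : Set K)) := by
        rfl
      rw [this]
      exact ENNReal.ofReal_le_ofReal hle
    have h4 : (rMeasure L hpos) C ≤ ENNReal.ofReal (θ⁻¹ * L g) := by
      rw [← h2] at h3; exact h1.trans h3
    exact ENNReal.toReal_le_of_le_ofReal (mul_nonneg (inv_nonneg.2 hθ0.le) hLg) h4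
  by_contra hcon
  push_neg at hcon
  have hm : 0 < ((rMeasure L hpos) C).toReal := lt_of_le_of_lt hLg hcon
  obtain ⟨θ, hθ1, hθ2⟩ := exists_between
    ((div_lt_one hm).2 hcon)
  have hθ0 : 0 < θ := lt_of_le_of_lt (div_nonneg hLg hm.le) hθ1
  have h5 := key θ hθ0 hθ2
  have h6 : L g < θ * ((rMeasure L hpos) C).toReal := (div_lt_iff₀ hm).1 hθ1
  have h7 : θ * ((rMeasure L hpos) C).toReal ≤ θ * (θ⁻¹ * L g) :=
    mul_le_mul_of_nonneg_left h5 hθ0.le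
  rw [← mul_assoc, mul_inv_cancel₀ hθ0.ne', one_mul] at h7
  linarith

/-- Key bound: integral of a subordinate function is at most the measure of the open set. -/
lemma integral_le_rMeasure_open (hone : L (ContinuousMap.const K 1) = 1)
    {U : Set K} (hU : IsOpen U) {g : C(K, ℝ)}
    (hg1 : ∀ x, g x ≤ 1) (hgU : ∀ x, x ∉ U → g x = 0) :
    ∫ x, g x ∂(rMeasure L hpos) ≤ ((rMeasure L hpos) U).toReal := by
  haveI := rMeasure_prob L hpos hone
  have hind : Integrable (U.indicator (fun _ => (1:ℝ))) (rMeasure L hpos) :=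
    (integrable_indicator_iff hU.measurableSet).2
      (integrableOn_const (measure_ne_top _ U))
  have hmono' : ∀ x, g x ≤ U.indicator (fun _ => (1:ℝ)) x := by
    intro x
    by_cases hx : x ∈ U
    · rw [Set.indicator_of_mem hx]; exact hg1 x
    · rw [Set.indicator_of_notMem hx, hgU x hx]
  have h := integral_mono (cmIntegrable (rMeasure L hpos) g) hind hmono'
  rwa [integral_indicator_const _ hU.measurableSet, smul_eq_mul, mul_one] at h

lemma integral_le_L_of_nonneg (hone : L (ContinuousMap.const K 1) = 1) (f : C(K, ℝ))
    (hf0 : ∀ x, 0 ≤ f x) :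
    ∫ x, f x ∂(rMeasure L hpos) ≤ L f := by
  haveI := rMeasure_prob L hpos hone
  set μ := rMeasure L hpos with hμ
  refine le_of_forall_pos_le_add (fun δ hδ => ?_)
  obtain ⟨n, hn⟩ := exists_nat_ge (‖f‖ / δ)
  have hbound : ∀ x, f x ≤ (n + 1) * δ := by
    intro x
    have h1 : f x ≤ ‖f‖ := le_trans (le_abs_self _) (f.norm_coe_le_norm x)
    have h2 : ‖f‖ ≤ n * δ := by
      rw [div_le_iff₀ hδ] at hn; linarith
    nlinarith
  set g : ℕ → C(K, ℝ) := fun i =>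
    ⟨fun x => min (max ((f x - i*δ)/δ) 0) 1,
      (((f.continuous.sub continuous_const).div_const δ).max continuous_const).min
        continuous_const⟩ with hg
  have hg0 : ∀ i x, 0 ≤ g i x := fun i x => le_min (le_max_right _ _) zero_le_one
  have hg1 : ∀ i x, g i x ≤ 1 := fun i x => min_le_right _ _
  have hgsum : ∀ x, ∑ i ∈ Finset.range (n+1), δ * g i x = f x := by
    intro x
    have := Finset.sum_range_sub (f := fun i => min (f x) (i * δ)) (n + 1)
    have heq : ∀ i ∈ Finset.range (n+1), δ * g i x
        = min (f x) ((i:ℝ) * δ + δ) - min (f x) ((i:ℝ) * δ) := by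
      intro i _
      exact clamp_eq hδ (f x) ((i:ℝ) * δ)
    rw [Finset.sum_congr rfl heq]
    have : ∀ i : ℕ, ((i:ℝ) * δ + δ) = (((i+1 : ℕ)):ℝ) * δ := by
      intro i; push_cast; ring
    calc ∑ i ∈ Finset.range (n+1), (min (f x) ((i:ℝ) * δ + δ) - min (f x) ((i:ℝ) * δ))
        = ∑ i ∈ Finset.range (n+1),
            ((fun j : ℕ => min (f x) ((j:ℝ) * δ)) (i+1) - (fun j : ℕ => min (f x) ((j:ℝ) * δ)) i) := by
          refine Finset.sum_congr rfl (fun i _ => ?_)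
          rw [this i]
      _ = min (f x) (((n+1 : ℕ):ℝ) * δ) - min (f x) (((0:ℕ):ℝ) * δ) :=
          Finset.sum_range_sub (fun j : ℕ => min (f x) ((j:ℝ) * δ)) (n+1)
      _ = f x := by
          rw [min_eq_left (by push_cast; exact hbound x)]
          simp [min_eq_right (hf0 x)]
  have hLsum : L f = ∑ i ∈ Finset.range (n+1), δ * L (g i) := by
    have hfeq : f = ∑ i ∈ Finset.range (n+1), δ • g i := by
      ext x
      rw [ContinuousMap.sum_apply]
      simp only [ContinuousMap.smul_apply, smul_eq_mul]
      exact (hgsum x).symm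
    rw [hfeq, map_sum]
    refine Finset.sum_congr rfl (fun i _ => ?_)
    rw [_root_.map_smul, smul_eq_mul]
  have hIsum : ∫ x, f x ∂μ = ∑ i ∈ Finset.range (n+1), δ * ∫ x, g i x ∂μ := by
    have hfeq : (fun x => f x) = fun x => ∑ i ∈ Finset.range (n+1), δ * g i x :=
      funext fun x => (hgsum x).symm
    rw [hfeq, integral_finset_sum _
      (fun i _ => (cmIntegrable μ (g i)).const_mul δ)]
    refine Finset.sum_congr rfl (fun i _ => ?_)
    exact integral_const_mul δ _
  -- bounds
  set m : ℕ → ℝ := fun i => (μ {x | (i:ℝ) * δ < f x}).toReal with hm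
  have hInt_le : ∀ i, ∫ x, g i x ∂μ ≤ m i := by
    intro i
    refine integral_le_rMeasure_open L hpos hone
      (isOpen_lt continuous_const f.continuous) (hg1 i) ?_
    intro x hx
    simp only [Set.mem_setOf_eq, not_lt] at hx
    show min (max ((f x - i*δ)/δ) 0) 1 = 0
    rw [max_eq_right (div_nonpos_of_nonpos_of_nonneg (by linarith) hδ.le),
      min_eq_left zero_le_one]
  have hL_ge : ∀ i, m (i+1) ≤ L (g i) := by
    intro i
    have hC : IsClosed {x | ((i:ℝ)+1) * δ ≤ f x} :=
      isClosed_le continuous_const f.continuous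
    have hsub : {x | ((i+1:ℕ):ℝ) * δ < f x} ⊆ {x | ((i:ℝ)+1) * δ ≤ f x} := by
      intro x hx
      simp only [Set.mem_setOf_eq] at *
      push_cast at hx
      linarith
    have h1 : m (i+1) ≤ (μ {x | ((i:ℝ)+1) * δ ≤ f x}).toReal := by
      refine ENNReal.toReal_mono (measure_ne_top _ _) (measure_mono hsub)
    refine h1.trans ?_
    refine rMeasure_compact_le L hpos (hg0 i) ?_
    intro x hx
    simp only [Set.mem_setOf_eq] at hx
    have : (1:ℝ) ≤ (f x - i*δ)/δ := (one_le_div hδ).2 (by linarith)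
    show (1:ℝ) ≤ min (max ((f x - i*δ)/δ) 0) 1
    exact le_min (le_max_of_le_left this) le_rfl
  have hm0 : m 0 ≤ 1 := by
    have : μ {x | ((0:ℕ):ℝ) * δ < f x} ≤ 1 := prob_le_one
    calc m 0 ≤ (1 : ℝ≥0∞).toReal := ENNReal.toReal_mono (by simp) this
      _ = 1 := by simp
  have hLg_nonneg : ∀ i, 0 ≤ L (g i) := fun i => hpos _ (hg0 i)
  calc ∫ x, f x ∂μ = ∑ i ∈ Finset.range (n+1), δ * ∫ x, g i x ∂μ := hIsum
    _ ≤ ∑ i ∈ Finset.range (n+1), δ * m i := by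
        refine Finset.sum_le_sum (fun i _ => ?_)
        exact mul_le_mul_of_nonneg_left (hInt_le i) hδ.le
    _ = (∑ i ∈ Finset.range n, δ * m (i+1)) + δ * m 0 :=
        Finset.sum_range_succ' (fun i => δ * m i) n
    _ ≤ (∑ i ∈ Finset.range n, δ * L (g i)) + δ * 1 := by
        refine add_le_add (Finset.sum_le_sum (fun i _ => ?_)) ?_
        · exact mul_le_mul_of_nonneg_left (hL_ge i) hδ.le
        · exact mul_le_mul_of_nonneg_left hm0 hδ.le
    _ ≤ (∑ i ∈ Finset.range (n+1), δ * L (g i)) + δ := by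
        rw [Finset.sum_range_succ]
        have : 0 ≤ δ * L (g n) := mul_nonneg hδ.le (hLg_nonneg n)
        linarith
    _ = L f + δ := by rw [hLsum]

lemma L_const (c : ℝ) (hone : L (ContinuousMap.const K 1) = 1) :
    L (ContinuousMap.const K c) = c := by
  have : ContinuousMap.const K c = c • ContinuousMap.const K 1 := by
    ext x; simp
  rw [this, _root_.map_smul, smul_eq_mul, hone, mul_one]

lemma integral_le_L (hone : L (ContinuousMap.const K 1) = 1) (f : C(K, ℝ)) :
    ∫ x, f x ∂(rMeasure L hpos) ≤ L f := by
  haveI := rMeasure_prob L hpos hone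
  set μ := rMeasure L hpos with hμ
  have key := integral_le_L_of_nonneg L hpos hone (f + ContinuousMap.const K ‖f‖)
    (fun x => by
      have : -f x ≤ ‖f‖ := le_trans (neg_le_abs _) (f.norm_coe_le_norm x)
      simp only [ContinuousMap.add_apply, ContinuousMap.const_apply]
      linarith)
  have h1 : ∫ x, (f + ContinuousMap.const K ‖f‖) x ∂μ = (∫ x, f x ∂μ) + ‖f‖ := by
    simp only [ContinuousMap.add_apply, ContinuousMap.const_apply]
    rw [integral_add (cmIntegrable μ f) (integrable_const _), integral_const]
    simp
  have h2 : L (f + ContinuousMap.const K ‖f‖) = L f + ‖f‖ := by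
    rw [map_add, L_const L hpos ‖f‖ hone]
  rw [h1, h2] at key
  linarith

lemma integral_rMeasure_eq (hone : L (ContinuousMap.const K 1) = 1) (f : C(K, ℝ)) :
    ∫ x, f x ∂(rMeasure L hpos) = L f := by
  haveI := rMeasure_prob L hpos hone
  refine le_antisymm (integral_le_L L hpos hone f) ?_
  have key := integral_le_L L hpos hone (-f)
  have h1 : ∫ x, (-f) x ∂(rMeasure L hpos) = -∫ x, f x ∂(rMeasure L hpos) := by
    simp only [ContinuousMap.neg_apply]
    exact integral_neg _
  rw [h1, map_neg] at key
  linarith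

end withPos

end RMK

section Tangent

variable {K : Type*} [MetricSpace K] [CompactSpace K]

lemma p_lipschitz (p : C(K, ℝ) → ℝ)
    (hmono : ∀ φ ψ : C(K, ℝ), (∀ x, φ x ≤ ψ x) → p φ ≤ p ψ)
    (htrans : ∀ (φ : C(K, ℝ)) (c : ℝ), p (φ + ContinuousMap.const K c) = p φ + c) :
    LipschitzWith 1 p := by
  have key : ∀ a b : C(K, ℝ), p a - p b ≤ dist a b := by
    intro a b
    have hab : ∀ x, a x ≤ (b + ContinuousMap.const K (dist a b)) x := by
      intro x
      have h1 : dist (a x) (b x) ≤ dist a b := ContinuousMap.dist_apply_le_dist x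
      rw [Real.dist_eq] at h1
      have h2 : a x - b x ≤ |a x - b x| := le_abs_self _
      simp only [ContinuousMap.add_apply, ContinuousMap.const_apply]
      linarith
    have h1 : p a ≤ p (b + ContinuousMap.const K (dist a b)) := hmono _ _ hab
    rw [htrans] at h1
    linarith
  refine LipschitzWith.of_dist_le_mul fun a b => ?_
  rw [Real.dist_eq, NNReal.coe_one, one_mul, abs_sub_le_iff]
  exact ⟨key a b, by rw [dist_comm]; exact key b a⟩

lemma exists_tangent (p : C(K, ℝ) → ℝ) (hconv : ConvexOn ℝ Set.univ p)
    (hmono : ∀ φ ψ : C(K, ℝ), (∀ x, φ x ≤ ψ x) → p φ ≤ p ψ)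
    (htrans : ∀ (φ : C(K, ℝ)) (c : ℝ), p (φ + ContinuousMap.const K c) = p φ + c)
    (φ : C(K, ℝ)) :
    ∃ L : C(K, ℝ) →L[ℝ] ℝ, ∀ ψ : C(K, ℝ), L ψ ≤ p (φ + ψ) - p φ := by
  classical
  set q : C(K, ℝ) → ℝ := fun ψ => p (φ + ψ) - p φ with hqdef
  have hq0 : q 0 = 0 := by simp [hqdef]
  have hqcont : Continuous q := by
    have h1 : Continuous p := (p_lipschitz p hmono htrans).continuous
    exact (h1.comp (continuous_const.add continuous_id)).sub continuous_const
  have hqconv : ∀ (x y : C(K, ℝ)) (a b : ℝ), 0 ≤ a → 0 ≤ b → a + b = 1 →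
      q (a • x + b • y) ≤ a * q x + b * q y := by
    intro x y a b ha hb hab
    have harg : φ + (a • x + b • y) = a • (φ + x) + b • (φ + y) := by
      rw [smul_add, smul_add, add_add_add_comm, Convex.combo_self hab]
    have h1 := hconv.2 (Set.mem_univ (φ + x)) (Set.mem_univ (φ + y)) ha hb hab
    simp only [smul_eq_mul] at h1
    have h2 : a * p φ + b * p φ = p φ := by rw [← add_mul, hab, one_mul]
    simp only [hqdef]
    rw [harg]
    linarith
  set s : Set (C(K, ℝ) × ℝ) := {z | q z.1 < z.2} with hsdef
  have hsopen : IsOpen s := isOpen_lt (hqcont.comp continuous_fst) continuous_snd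
  have hsconv : Convex ℝ s := by
    intro z hz w hw a b ha hb hab
    simp only [hsdef, Set.mem_setOf_eq] at *
    have hfst : (a • z + b • w).1 = a • z.1 + b • w.1 := rfl
    have hsnd : (a • z + b • w).2 = a * z.2 + b * w.2 := rfl
    rw [hfst, hsnd]
    refine lt_of_le_of_lt (hqconv z.1 w.1 a b ha hb hab) ?_
    rcases eq_or_lt_of_le ha with ha0 | ha0
    · have hb1 : b = 1 := by linarith
      rw [← ha0, hb1]; simpa using hw
    · have h1 : a * q z.1 < a * z.2 := mul_lt_mul_of_pos_left hz ha0
      have h2 : b * q w.1 ≤ b * w.2 := mul_le_mul_of_nonneg_left hw.le hb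
      linarith
  have h0 : (0, 0) ∉ s := by
    simp only [hsdef, Set.mem_setOf_eq, hq0]
    exact lt_irrefl 0
  obtain ⟨f, hf⟩ := geometric_hahn_banach_open_point hsconv hsopen h0
  have hf0 : f (0, 0) = 0 := map_zero f
  have hc : f (0, 1) < 0 := by
    have : ((0 : C(K, ℝ)), (1:ℝ)) ∈ s := by
      simp only [hsdef, Set.mem_setOf_eq, hq0]; exact zero_lt_one
    have := hf _ this
    rwa [hf0] at this
  set c : ℝ := f (0, 1) with hcdef
  have hkey : ∀ (ψ : C(K, ℝ)) (t : ℝ), q ψ < t → f (ψ, 0) + t * c < 0 := by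
    intro ψ t ht
    have hmem : (ψ, t) ∈ s := ht
    have h1 := hf _ hmem
    rw [hf0] at h1
    have h2 : (ψ, t) = (ψ, (0:ℝ)) + t • ((0 : C(K, ℝ)), (1:ℝ)) := by
      simp [Prod.ext_iff]
    rw [h2, map_add, _root_.map_smul, smul_eq_mul] at h1
    exact h1
  have hkey2 : ∀ ψ : C(K, ℝ), f (ψ, 0) + q ψ * c ≤ 0 := by
    intro ψ
    refine le_of_forall_pos_le_add (fun ε hε => ?_)
    have hεc : 0 < ε / (-c) := div_pos hε (by linarith)
    have := hkey ψ (q ψ + ε / (-c)) (by linarith)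
    have hexp : f (ψ, 0) + (q ψ + ε / (-c)) * c
        = f (ψ, 0) + q ψ * c + (ε / (-c)) * c := by ring
    rw [hexp] at this
    have : f (ψ, 0) + q ψ * c < -((ε / (-c)) * c) := by linarith
    have hcalc : -((ε / (-c)) * c) = ε := by
      have hc0 : c ≠ 0 := ne_of_lt hc
      field_simp
    linarith [hcalc ▸ this]
  refine ⟨(-c)⁻¹ • (f.comp (ContinuousLinearMap.inl ℝ C(K, ℝ) ℝ)), fun ψ => ?_⟩
  have happ : ((-c)⁻¹ • (f.comp (ContinuousLinearMap.inl ℝ C(K, ℝ) ℝ))) ψ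
      = (-c)⁻¹ * f (ψ, 0) := rfl
  rw [happ]
  have hcpos : 0 < -c := by linarith
  rw [inv_mul_le_iff₀ hcpos]
  have := hkey2 ψ
  show f (ψ, 0) ≤ -c * q ψ
  nlinarith

end Tangent

section Main

variable {K : Type*} [MetricSpace K] [CompactSpace K] [MeasurableSpace K] [BorelSpace K]
  (p : C(K, ℝ) → ℝ)

/-- `absEnt p ν ≤ p ψ - ∫ ψ dν` for any `ψ`. -/
lemma absEnt_le_sub
    (htrans : ∀ (φ : C(K, ℝ)) (c : ℝ), p (φ + ContinuousMap.const K c) = p φ + c)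
    (ν : Measure K) (hν : IsProbabilityMeasure ν) (ψ : C(K, ℝ)) :
    absEnt p ν ≤ ((p ψ - ∫ x, ψ x ∂ν : ℝ) : EReal) := by
  set φhat : C(K, ℝ) := ContinuousMap.const K (p ψ) - ψ with hφhat
  have hcond : p (-φhat) ≤ 0 := by
    have heq : -φhat = ψ + ContinuousMap.const K (-(p ψ)) := by
      ext x; simp [hφhat]; ring
    rw [heq, htrans]
    linarith
  have hint : (∫ x, φhat x ∂ν) = p ψ - ∫ x, ψ x ∂ν := by
    simp only [hφhat, ContinuousMap.sub_apply, ContinuousMap.const_apply]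
    rw [integral_sub (integrable_const _) (cmIntegrable ν ψ), integral_const]
    simp
  have := iInf₂_le (f := fun (φ' : C(K, ℝ)) (_ : p (-φ') ≤ 0) =>
    ((∫ x, φ' x ∂ν : ℝ) : EReal)) φhat hcond
  rw [hint] at this
  exact this

lemma partA
    (htrans : ∀ (φ : C(K, ℝ)) (c : ℝ), p (φ + ContinuousMap.const K c) = p φ + c)
    (φ : C(K, ℝ)) (ν : Measure K) (hν : IsProbabilityMeasure ν) :
    absEnt p ν + ((∫ x, φ x ∂ν : ℝ) : EReal) ≤ (p φ : EReal) := by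
  have h1 := absEnt_le_sub p htrans ν hν φ
  calc absEnt p ν + ((∫ x, φ x ∂ν : ℝ) : EReal)
      ≤ ((p φ - ∫ x, φ x ∂ν : ℝ) : EReal) + ((∫ x, φ x ∂ν : ℝ) : EReal) :=
        add_le_add_left h1 _
    _ = (p φ : EReal) := by
        rw [← EReal.coe_add]
        norm_num

lemma partC2
    (htrans : ∀ (φ : C(K, ℝ)) (c : ℝ), p (φ + ContinuousMap.const K c) = p φ + c)
    (φ : C(K, ℝ)) (ν : Measure K) (hν : IsProbabilityMeasure ν)
    (hT : ∀ ψ : C(K, ℝ), (∫ x, ψ x ∂ν) ≤ p (φ + ψ) - p φ) :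
    absEnt p ν + ((∫ x, φ x ∂ν : ℝ) : EReal) = (p φ : EReal) := by
  refine le_antisymm (partA p htrans φ ν hν) ?_
  have hge : ((p φ - ∫ x, φ x ∂ν : ℝ) : EReal) ≤ absEnt p ν := by
    refine le_iInf₂ (fun φ' hφ' => ?_)
    have := hT (-φ' - φ)
    have heq : φ + (-φ' - φ) = -φ' := by ring
    rw [heq] at this
    have hint : (∫ x, (-φ' - φ) x ∂ν) = -(∫ x, φ' x ∂ν) - ∫ x, φ x ∂ν := by
      have heq2 : (fun x => (-φ' - φ) x) = fun x => (-(φ' x)) - φ x := by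
        funext x; simp
      have hiφ' : Integrable (fun x => -φ' x) ν := (cmIntegrable ν φ').neg
      rw [heq2, integral_sub hiφ' (cmIntegrable ν φ), integral_neg]
    rw [hint] at this
    have hre : p φ - ∫ x, φ x ∂ν ≤ ∫ x, φ' x ∂ν := by linarith
    exact_mod_cast hre
  calc (p φ : EReal) = ((p φ - ∫ x, φ x ∂ν : ℝ) : EReal) + ((∫ x, φ x ∂ν : ℝ) : EReal) := by
        rw [← EReal.coe_add]; norm_num
    _ ≤ absEnt p ν + ((∫ x, φ x ∂ν : ℝ) : EReal) := add_le_add_left hge _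

end Main

theorem stmt19 {K : Type*} [MetricSpace K] [CompactSpace K] [MeasurableSpace K] [BorelSpace K]
    (p : C(K, ℝ) → ℝ) (hconv : ConvexOn ℝ Set.univ p)
    (hmono : ∀ φ ψ : C(K, ℝ), (∀ x, φ x ≤ ψ x) → p φ ≤ p ψ)
    (htrans : ∀ (φ : C(K, ℝ)) (c : ℝ), p (φ + ContinuousMap.const K c) = p φ + c)
    (φ : C(K, ℝ)) :
    (∀ ν : Measure K, IsProbabilityMeasure ν →
      absEnt p ν + ((∫ x, φ x ∂ν : ℝ) : EReal) ≤ (p φ : EReal)) ∧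
    (∀ ν : Measure K, IsProbabilityMeasure ν →
      absEnt p ν = ⨅ ψ : C(K, ℝ), ((p ψ - ∫ x, ψ x ∂ν : ℝ) : EReal)) ∧
    (∃ ν : Measure K, IsProbabilityMeasure ν ∧
      absEnt p ν + ((∫ x, φ x ∂ν : ℝ) : EReal) = (p φ : EReal)) ∧
    ∀ ν : Measure K, IsProbabilityMeasure ν →
      (∀ ψ : C(K, ℝ), (∫ x, ψ x ∂ν) ≤ p (φ + ψ) - p φ) →
      absEnt p ν + ((∫ x, φ x ∂ν : ℝ) : EReal) = (p φ : EReal) := by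
  refine ⟨fun ν hν => partA p htrans φ ν hν, ?_, ?_, fun ν hν hT => partC2 p htrans φ ν hν hT⟩
  · -- part (b)
    intro ν hν
    refine le_antisymm (le_iInf (fun ψ => absEnt_le_sub p htrans ν hν ψ)) ?_
    refine le_iInf₂ (fun φ' hφ' => ?_)
    calc ⨅ ψ : C(K, ℝ), ((p ψ - ∫ x, ψ x ∂ν : ℝ) : EReal)
        ≤ ((p (-φ') - ∫ x, (-φ') x ∂ν : ℝ) : EReal) := iInf_le _ (-φ')
      _ ≤ ((∫ x, φ' x ∂ν : ℝ) : EReal) := by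
          have hneg : (∫ x, (-φ') x ∂ν) = -∫ x, φ' x ∂ν := by
            simp only [ContinuousMap.neg_apply]
            exact integral_neg _
          rw [hneg]
          apply EReal.coe_le_coe_iff.2
          linarith
  · -- part (c): existence via tangent functional and Riesz measure
    obtain ⟨L, hL⟩ := exists_tangent p hconv hmono htrans φ
    have hpos : ∀ f : C(K, ℝ), (∀ x, 0 ≤ f x) → 0 ≤ L f := by
      intro f hf
      have h1 := hL (-f)
      have h2 : p (φ + -f) ≤ p φ := hmono _ _ (fun x => by
        simp only [ContinuousMap.add_apply, ContinuousMap.neg_apply]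
        linarith [hf x])
      rw [map_neg] at h1
      linarith
    have hone : L (ContinuousMap.const K 1) = 1 := by
      have h1 := hL (ContinuousMap.const K 1)
      rw [htrans] at h1
      have h2 := hL (ContinuousMap.const K (-1))
      rw [htrans] at h2
      have h3 : ContinuousMap.const K (-1 : ℝ) = -(ContinuousMap.const K (1:ℝ)) := by
        ext x; simp
      rw [h3, map_neg] at h2
      linarith
    refine ⟨rMeasure L hpos, rMeasure_prob L hpos hone, ?_⟩
    refine partC2 p htrans φ _ (rMeasure_prob L hpos hone) (fun ψ => ?_)
    rw [integral_rMeasure_eq L hpos hone ψ]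
    exact hL ψ
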